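/- Soundness of the modified system: every judgment Γ ⊢ S <: T derivable in Pientka's modified subtyping system (with SA-Hyp and SA-Tr-TVar) is derivable in the original algorithmic system (with SA-Trans-TVar), provided all types bound in Γ are well-scoped with respect to Γ. -/

import Mathlib

inductive Ty where
  | var : ℕ → Ty
  | top : Ty
  | arrow : Ty → Ty → Ty
  | all : ℕ → Ty → Ty → Ty

abbrev Env := List (ℕ × Ty)

def freeVars : Ty → Finset ℕ
  | .var x => {x}
  | .top => ∅
  | .arrow a b => freeVars a ∪ freeVars b
  | .all x a b => freeVars a ∪ (freeVars b \ {x})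

def boundVars (Γ : Env) : Finset ℕ := (Γ.map Prod.fst).toFinset

/-- A type is well-scoped in Γ if all its free variables are bound in Γ. -/
def WellScoped (Γ : Env) (t : Ty) : Prop := freeVars t ⊆ boundVars Γ

/-- The original algorithmic subtyping system for F<:. -/
inductive Subty : Env → Ty → Ty → Prop where
  | top {Γ S} : WellScoped Γ S → Subty Γ S .top
  | refl {Γ X} : X ∈ boundVars Γ → Subty Γ (.var X) (.var X)
  | trans_tvar {Γ X U T} : (X, U) ∈ Γ → Subty Γ U T → Subty Γ (.var X) T
  | arrow {Γ S₁ S₂ T₁ T₂} : Subty Γ T₁ S₁ → Subty Γ S₂ T₂ →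
      Subty Γ (.arrow S₁ S₂) (.arrow T₁ T₂)
  | all {Γ X S₁ S₂ T₁ T₂} : Subty Γ T₁ S₁ → Subty ((X, T₁) :: Γ) S₂ T₂ →
      Subty Γ (.all X S₁ S₂) (.all X T₁ T₂)

/-- Pientka's modified subtyping system, with SA-Hyp and SA-Tr-TVar
    in place of SA-Trans-TVar. -/
inductive Subty' : Env → Ty → Ty → Prop where
  | top {Γ S} : WellScoped Γ S → Subty' Γ S .top
  | refl {Γ X} : X ∈ boundVars Γ → Subty' Γ (.var X) (.var X)
  | hyp {Γ X T} : (X, T) ∈ Γ → Subty' Γ (.var X) T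
  | tr_tvar {Γ X U T} : Subty' Γ (.var X) U → Subty' Γ U T → Subty' Γ (.var X) T
  | arrow {Γ S₁ S₂ T₁ T₂} : Subty' Γ T₁ S₁ → Subty' Γ S₂ T₂ →
      Subty' Γ (.arrow S₁ S₂) (.arrow T₁ T₂)
  | all {Γ X S₁ S₂ T₁ T₂} : Subty' Γ T₁ S₁ → Subty' ((X, T₁) :: Γ) S₂ T₂ →
      Subty' Γ (.all X S₁ S₂) (.all X T₁ T₂)

-- auxiliary lemmas, to be inserted before the theorem

def tsize : Ty → ℕ
  | .var _ => 1
  | .top => 1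
  | .arrow a b => tsize a + tsize b + 1
  | .all _ a b => tsize a + tsize b + 1

lemma boundVars_append (Δ Γ : Env) :
    boundVars (Δ ++ Γ) = boundVars Δ ∪ boundVars Γ := by
  simp [boundVars]

lemma boundVars_cons (p : ℕ × Ty) (Γ : Env) :
    boundVars (p :: Γ) = insert p.1 (boundVars Γ) := by
  simp [boundVars]

lemma mem_boundVars {X : ℕ} {U : Ty} {Γ : Env} (h : (X, U) ∈ Γ) : X ∈ boundVars Γ := by
  simp only [boundVars, List.mem_toFinset, List.mem_map]
  exact ⟨(X, U), h, rfl⟩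

lemma ws_mono {Γ Γ' : Env} {t : Ty} (h : WellScoped Γ t)
    (hs : boundVars Γ ⊆ boundVars Γ') : WellScoped Γ' t := h.trans hs

lemma boundVars_mid (Δ Γ : Env) (X : ℕ) (Q P : Ty) :
    boundVars (Δ ++ (X, Q) :: Γ) = boundVars (Δ ++ (X, P) :: Γ) := by
  simp [boundVars_append, boundVars_cons]

lemma subty_weaken {E : Env} {M N : Ty} (h : Subty E M N) :
    ∀ Δ Ξ Γ : Env, E = Δ ++ Γ → Subty (Δ ++ Ξ ++ Γ) M N := by
  induction h with
  | top hw =>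
    intro Δ Ξ Γ hE; subst hE
    refine .top (ws_mono hw ?_)
    simp only [boundVars_append]
    intro x hx; simp only [Finset.mem_union] at hx ⊢; tauto
  | refl hx =>
    intro Δ Ξ Γ hE; subst hE
    refine .refl ?_
    simp only [boundVars_append, Finset.mem_union] at hx ⊢; tauto
  | trans_tvar hm _ ih =>
    intro Δ Ξ Γ hE; subst hE
    refine .trans_tvar (U := _) ?_ (ih Δ Ξ Γ rfl)
    simp only [List.mem_append] at hm ⊢; tauto
  | arrow _ _ ih1 ih2 =>
    intro Δ Ξ Γ hE
    exact .arrow (ih1 Δ Ξ Γ hE) (ih2 Δ Ξ Γ hE)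
  | all _ _ ih1 ih2 =>
    intro Δ Ξ Γ hE; subst hE
    exact .all (ih1 Δ Ξ Γ rfl) (ih2 (_ :: Δ) Ξ Γ rfl)

lemma refl_of_ws : ∀ {T : Ty} {Γ : Env}, WellScoped Γ T → Subty Γ T T := by
  intro T
  induction T with
  | var x => intro Γ h; exact .refl (h (by simp [freeVars]))
  | top => intro Γ _; exact .top (by simp [WellScoped, freeVars])
  | arrow a b iha ihb =>
    intro Γ h
    rw [WellScoped, freeVars, Finset.union_subset_iff] at h
    exact .arrow (iha h.1) (ihb h.2)
  | all x a b iha ihb =>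
    intro Γ h
    rw [WellScoped, freeVars, Finset.union_subset_iff] at h
    refine .all (iha h.1) (ihb ?_)
    intro y hy
    rw [boundVars_cons, Finset.mem_insert]
    by_cases hyx : y = x
    · exact Or.inl hyx
    · exact Or.inr (h.2 (Finset.mem_sdiff.2 ⟨hy, by simp [hyx]⟩))

lemma subty_ws {Γ : Env} {S T : Ty} (h : Subty Γ S T) :
    WellScoped Γ S ∧ WellScoped Γ T := by
  induction h with
  | top hw => exact ⟨hw, by simp [WellScoped, freeVars]⟩
  | refl hx => exact ⟨by simpa [WellScoped, freeVars] using hx,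
      by simpa [WellScoped, freeVars] using hx⟩
  | trans_tvar hm _ ih =>
    exact ⟨by simpa [WellScoped, freeVars] using mem_boundVars hm, ih.2⟩
  | arrow _ _ ih1 ih2 =>
    constructor <;> rw [WellScoped, freeVars] <;>
      exact Finset.union_subset (by first | exact ih1.1 | exact ih1.2)
        (by first | exact ih2.1 | exact ih2.2)
  | all _ _ ih1 ih2 =>
    have hbody : ∀ {B : Ty} {X : ℕ} {T₁ : Ty} {Γ : Env},
        WellScoped ((X, T₁) :: Γ) B → freeVars B \ {X} ⊆ boundVars Γ := by
      intro B X T₁ Γ hB y hy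
      rw [Finset.mem_sdiff, Finset.mem_singleton] at hy
      have := hB hy.1
      rw [boundVars_cons, Finset.mem_insert] at this
      exact this.resolve_left hy.2
    constructor <;> rw [WellScoped, freeVars]
    · exact Finset.union_subset ih1.2 (hbody ih2.1)
    · exact Finset.union_subset ih1.1 (hbody ih2.2)

lemma trans_narrow : ∀ n : ℕ,
    (∀ Q : Ty, tsize Q ≤ n → ∀ (Γ : Env) (S T : Ty),
      Subty Γ S Q → Subty Γ Q T → Subty Γ S T) ∧
    (∀ Q : Ty, tsize Q ≤ n → ∀ (P : Ty) (Γ : Env), Subty Γ P Q →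
      ∀ (E : Env) (M N : Ty), Subty E M N →
      ∀ (Δ : Env) (X : ℕ), E = Δ ++ (X, Q) :: Γ → Subty (Δ ++ (X, P) :: Γ) M N) := by
  intro n
  induction n using Nat.strong_induction_on with
  | _ n IH =>
  have htrans : ∀ Q : Ty, tsize Q ≤ n → ∀ (Γ : Env) (S T : Ty),
      Subty Γ S Q → Subty Γ Q T → Subty Γ S T := by
    intro Q hQ Γ S T h1 h2
    induction h1 generalizing T with
    | top hw =>
      cases h2 with
      | top => exact .top hw
    | refl hx => exact h2
    | trans_tvar hm _ ih => exact .trans_tvar hm (ih hQ _ h2)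
    | arrow h1a h1b iha ihb =>
      cases h2 with
      | top hw2 => exact .top (subty_ws (.arrow h1a h1b)).1
      | arrow h2a h2b =>
        rw [tsize] at hQ
        have ihm := IH (n - 1) (by omega)
        exact .arrow (ihm.1 _ (by omega) _ _ _ h2a h1a)
          (ihm.1 _ (by omega) _ _ _ h1b h2b)
    | all h1a h1b iha ihb =>
      cases h2 with
      | top hw2 => exact .top (subty_ws (.all h1a h1b)).1
      | @all _ _ _ _ T₁ T₂ h2a h2b =>
        rw [tsize] at hQ
        have ihm := IH (n - 1) (by omega)
        have tA := ihm.1 _ (by omega) _ _ _ h2a h1a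
        have nb := ihm.2 _ (by omega) T₁ _ h2a _ _ _ h1b [] _ rfl
        exact .all tA (ihm.1 _ (by omega) _ _ _ nb h2b)
  refine ⟨htrans, ?_⟩
  intro Q hQ P Γ hPQ E M N h
  induction h with
  | top hw =>
    intro Δ X hE; subst hE
    exact .top (ws_mono hw (le_of_eq (boundVars_mid Δ Γ X Q P)))
  | refl hx =>
    intro Δ X hE; subst hE
    exact .refl (by rwa [← boundVars_mid Δ Γ X Q P])
  | @trans_tvar _ Y U N hm _ ih =>
    intro Δ X hE; subst hE
    have hUN := ih Δ X rfl
    rcases List.mem_append.1 hm with hd | hc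
    · exact .trans_tvar (List.mem_append.2 (Or.inl hd)) hUN
    · rcases List.mem_cons.1 hc with he | ht
      · obtain ⟨hYX, hUQ⟩ := Prod.mk.injEq .. ▸ he
        subst hYX; subst hUQ
        have hPw : Subty (Δ ++ (Y, P) :: Γ) P U := by
          have := subty_weaken hPQ [] (Δ ++ [(Y, P)]) Γ rfl
          simpa using this
        exact .trans_tvar (List.mem_append.2 (Or.inr List.mem_cons_self))
          (htrans U hQ _ _ _ hPw hUN)
      · exact .trans_tvar (List.mem_append.2 (Or.inr (List.mem_cons.2 (Or.inr ht)))) hUN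
  | arrow _ _ ih1 ih2 =>
    intro Δ X hE
    exact .arrow (ih1 Δ X hE) (ih2 Δ X hE)
  | all _ _ ih1 ih2 =>
    intro Δ X hE; subst hE
    exact .all (ih1 Δ X rfl) (ih2 (_ :: Δ) X rfl)

lemma subty_trans {Γ : Env} {S Q T : Ty}
    (h1 : Subty Γ S Q) (h2 : Subty Γ Q T) : Subty Γ S T :=
  (trans_narrow (tsize Q)).1 Q le_rfl Γ S T h1 h2

theorem sub'_sound (Γ : Env) (S T : Ty)
    (hΓ : ∀ b ∈ Γ, WellScoped Γ b.2)
    (h : Subty' Γ S T) : Subty Γ S T := by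
  induction h with
  | top hw => exact .top hw
  | refl hx => exact .refl hx
  | hyp hm => exact .trans_tvar hm (refl_of_ws (hΓ _ hm))
  | tr_tvar _ _ ih1 ih2 => exact subty_trans (ih1 hΓ) (ih2 hΓ)
  | arrow _ _ ih1 ih2 => exact .arrow (ih1 hΓ) (ih2 hΓ)
  | @all Γ' X S₁ S₂ T₁ T₂ _ _ ih1 ih2 =>
    have s1 := ih1 hΓ
    have hT₁ : WellScoped Γ' T₁ := (subty_ws s1).1
    refine .all s1 (ih2 ?_)
    intro b hb
    rcases List.mem_cons.1 hb with he | ht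
    · subst he
      exact ws_mono hT₁ (by rw [boundVars_cons]; exact Finset.subset_insert _ _)
    · exact ws_mono (hΓ b ht) (by rw [boundVars_cons]; exact Finset.subset_insert _ _)
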